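/- Let R : Fin n → Fin n → Fin n → Fin n → ℝ satisfy R i j k l = -R j i k l = -R i j l k = R k l i j, let P : Fin n → Fin n → Fin n → ℝ satisfy P i j k = -P j i k, and let M : Fin n → Fin n → ℝ be symmetric. Suppose the Harnack quadratic form is weakly positive, i.e., for every antisymmetric U : Fin n → Fin n → ℝ and every W : Fin n → ℝ one has ∑ R i j k l · U i j · U k l + 2·∑ P i j k · U i j · W k + ∑ M i j · W i · W j ≥ 0. Then for every antisymmetric U and every W: 2·∑ R i k j l · M k l · W i · W j − 2·∑ P i k l · P j l k · W i · W j + 8·∑ R i l k m · P l j m · U i j · W k + 4·∑ R i m k n · R j m l n · U i j · U k l ≥ 0. -/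

import Mathlib

section HarnackAux

private lemma hk_pull3 {α β γ : Type*} {A : Type*} [AddCommMonoid A]
    [Fintype α] [Fintype β] [Fintype γ] (f : α → β → γ → A) :
    ∑ a, ∑ b, ∑ c, f a b c = ∑ c, ∑ a, ∑ b, f a b c :=
  (Finset.sum_congr rfl fun _ _ => Finset.sum_comm).trans Finset.sum_comm

private lemma hk_pull4 {α β γ δ : Type*} {A : Type*} [AddCommMonoid A]
    [Fintype α] [Fintype β] [Fintype γ] [Fintype δ] (f : α → β → γ → δ → A) :
    ∑ a, ∑ b, ∑ c, ∑ d, f a b c d = ∑ d, ∑ a, ∑ b, ∑ c, f a b c d :=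
  (Finset.sum_congr rfl fun a _ => hk_pull3 (f a)).trans Finset.sum_comm

private lemma hk_pull5 {α β γ δ ε : Type*} {A : Type*} [AddCommMonoid A]
    [Fintype α] [Fintype β] [Fintype γ] [Fintype δ] [Fintype ε]
    (f : α → β → γ → δ → ε → A) :
    ∑ a, ∑ b, ∑ c, ∑ d, ∑ e, f a b c d e = ∑ e, ∑ a, ∑ b, ∑ c, ∑ d, f a b c d e :=
  (Finset.sum_congr rfl fun a _ => hk_pull4 (f a)).trans Finset.sum_comm

private lemma hk_pull6 {α β γ δ ε ζ : Type*} {A : Type*} [AddCommMonoid A]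
    [Fintype α] [Fintype β] [Fintype γ] [Fintype δ] [Fintype ε] [Fintype ζ]
    (f : α → β → γ → δ → ε → ζ → A) :
    ∑ a, ∑ b, ∑ c, ∑ d, ∑ e, ∑ g, f a b c d e g
      = ∑ g, ∑ a, ∑ b, ∑ c, ∑ d, ∑ e, f a b c d e g :=
  (Finset.sum_congr rfl fun a _ => hk_pull5 (f a)).trans Finset.sum_comm

private lemma hk_pull7 {α β γ δ ε ζ η : Type*} {A : Type*} [AddCommMonoid A]
    [Fintype α] [Fintype β] [Fintype γ] [Fintype δ] [Fintype ε] [Fintype ζ] [Fintype η]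
    (f : α → β → γ → δ → ε → ζ → η → A) :
    ∑ a, ∑ b, ∑ c, ∑ d, ∑ e, ∑ g, ∑ h, f a b c d e g h
      = ∑ h, ∑ a, ∑ b, ∑ c, ∑ d, ∑ e, ∑ g, f a b c d e g h :=
  (Finset.sum_congr rfl fun a _ => hk_pull6 (f a)).trans Finset.sum_comm

private lemma hk_factor22 {α β γ δ : Type*}
    [Fintype α] [Fintype β] [Fintype γ] [Fintype δ] (F : α → β → ℝ) (G : γ → δ → ℝ) :
    ∑ a, ∑ b, ∑ c, ∑ d, F a b * G c d = (∑ a, ∑ b, F a b) * (∑ c, ∑ d, G c d) := by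
  simp only [← Finset.mul_sum, ← Finset.sum_mul]

private lemma hk_factor32 {α β γ δ ε : Type*}
    [Fintype α] [Fintype β] [Fintype γ] [Fintype δ] [Fintype ε]
    (F : α → β → γ → ℝ) (G : δ → ε → ℝ) :
    ∑ a, ∑ b, ∑ c, ∑ d, ∑ e, F a b c * G d e
      = (∑ a, ∑ b, ∑ c, F a b c) * (∑ d, ∑ e, G d e) := by
  simp only [← Finset.mul_sum, ← Finset.sum_mul]

private lemma hk_factor33 {α β γ δ ε ζ : Type*}
    [Fintype α] [Fintype β] [Fintype γ] [Fintype δ] [Fintype ε] [Fintype ζ]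
    (F : α → β → γ → ℝ) (G : δ → ε → ζ → ℝ) :
    ∑ a, ∑ b, ∑ c, ∑ d, ∑ e, ∑ g, F a b c * G d e g
      = (∑ a, ∑ b, ∑ c, F a b c) * (∑ d, ∑ e, ∑ g, G d e g) := by
  simp only [← Finset.mul_sum, ← Finset.sum_mul]

private lemma hk_acontr {n : ℕ} (g u : Fin n → Fin n → ℝ) (hg : ∀ i j, g i j = -g j i) :
    ∑ i, ∑ j, g i j * u i j = ∑ i, ∑ j, g i j * ((u i j - u j i) / 2) := by
  have h2 : ∑ i, ∑ j, g i j * u j i = -(∑ i, ∑ j, g i j * u i j) := by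
    rw [Finset.sum_comm, ← Finset.sum_neg_distrib]
    refine Finset.sum_congr rfl fun j _ => ?_
    rw [← Finset.sum_neg_distrib]
    refine Finset.sum_congr rfl fun i _ => ?_
    rw [hg i j]; ring
  have expand : ∑ i, ∑ j, g i j * ((u i j - u j i) / 2)
      = ((∑ i, ∑ j, g i j * u i j) - ∑ i, ∑ j, g i j * u j i) / 2 := by
    rw [← Finset.sum_sub_distrib, Finset.sum_div]
    refine Finset.sum_congr rfl fun i _ => ?_
    rw [← Finset.sum_sub_distrib, Finset.sum_div]
    exact Finset.sum_congr rfl fun j _ => by ring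
  rw [expand, h2]; ring

private lemma hk_extract2 {α β : Type*} [Fintype α] [Fintype β]
    (X : α → β → ℝ) (c : ℝ) :
    ∑ a, ∑ b, X a b * c = (∑ a, ∑ b, X a b) * c := by
  simp only [← Finset.sum_mul]

private lemma hk_extract1 {α : Type*} [Fintype α] (X : α → ℝ) (c : ℝ) :
    ∑ a, X a * c = (∑ a, X a) * c := by
  simp only [← Finset.sum_mul]

end HarnackAux

open scoped MatrixOrder in
private lemma hk_psd_factor {m : Type*} [Fintype m] [DecidableEq m] {A : Matrix m m ℝ}
    (hA : A.PosSemidef) : ∃ B : Matrix m m ℝ, A = B.conjTranspose * B := by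
  obtain ⟨X, hX, -, hXA⟩ := CFC.exists_sqrt_of_isSelfAdjoint_of_quasispectrumRestricts
    hA.isHermitian (QuasispectrumRestricts.nnreal_of_nonneg (Matrix.nonneg_iff_posSemidef.mpr hA))
  refine ⟨X, ?_⟩
  rw [← hXA]
  rw [← Matrix.star_eq_conjTranspose, hX.star_eq]

private def hkQ {n : ℕ} (R : Fin n → Fin n → Fin n → Fin n → ℝ)
    (P : Fin n → Fin n → Fin n → ℝ) (M : Fin n → Fin n → ℝ) :
    Matrix ((Fin n × Fin n) ⊕ Fin n) ((Fin n × Fin n) ⊕ Fin n) ℝ :=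
  Matrix.of fun α β =>
    match α, β with
    | Sum.inl p, Sum.inl q => R p.1 p.2 q.1 q.2
    | Sum.inl p, Sum.inr k => P p.1 p.2 k
    | Sum.inr k, Sum.inl q => P q.1 q.2 k
    | Sum.inr i, Sum.inr j => M i j

@[simp] private lemma hkQ_ll {n : ℕ} {R P M} (p q : Fin n × Fin n) :
    hkQ R P M (Sum.inl p) (Sum.inl q) = R p.1 p.2 q.1 q.2 := rfl
@[simp] private lemma hkQ_lr {n : ℕ} {R P M} (p : Fin n × Fin n) (k : Fin n) :
    hkQ R P M (Sum.inl p) (Sum.inr k) = P p.1 p.2 k := rfl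
@[simp] private lemma hkQ_rl {n : ℕ} {R P M} (k : Fin n) (q : Fin n × Fin n) :
    hkQ R P M (Sum.inr k) (Sum.inl q) = P q.1 q.2 k := rfl
@[simp] private lemma hkQ_rr {n : ℕ} {R P M} (i j : Fin n) :
    hkQ R P M (Sum.inr i) (Sum.inr j) = M i j := rfl

/-- If the Harnack quadratic form built from `R`, `P`, `M` is weakly positive, then the
quadratic curvature combination appearing in the evolution of the Harnack expression
is weakly positive as well. -/
theorem harnack_positivity {n : ℕ}
    (R : Fin n → Fin n → Fin n → Fin n → ℝ)
    (hR1 : ∀ i j k l, R i j k l = -R j i k l)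
    (hR2 : ∀ i j k l, R i j k l = -R i j l k)
    (hR3 : ∀ i j k l, R i j k l = R k l i j)
    (P : Fin n → Fin n → Fin n → ℝ)
    (hP : ∀ i j k, P i j k = -P j i k)
    (M : Fin n → Fin n → ℝ) (hM : ∀ i j, M i j = M j i)
    (hpos : ∀ (U : Fin n → Fin n → ℝ), (∀ i j, U i j = -U j i) →
      ∀ W : Fin n → ℝ,
        0 ≤ (∑ i, ∑ j, ∑ k, ∑ l, R i j k l * U i j * U k l)
          + 2 * (∑ i, ∑ j, ∑ k, P i j k * U i j * W k)
          + ∑ i, ∑ j, M i j * W i * W j) :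
    ∀ (U : Fin n → Fin n → ℝ), (∀ i j, U i j = -U j i) →
      ∀ W : Fin n → ℝ,
        0 ≤ 2 * (∑ i, ∑ j, ∑ k, ∑ l, R i k j l * M k l * W i * W j)
          - 2 * (∑ i, ∑ j, ∑ k, ∑ l, P i k l * P j l k * W i * W j)
          + 8 * (∑ i, ∑ j, ∑ k, ∑ l, ∑ p, R i l k p * P l j p * U i j * W k)
          + 4 * (∑ i, ∑ j, ∑ k, ∑ l, ∑ p, ∑ q, R i p k q * R j p l q * U i j * U k l) := by
  intro U hU W
  -- Step 1: the big block matrix is positive semidefinite.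
  have hherm : (hkQ R P M).IsHermitian := by
    rw [Matrix.IsHermitian]
    ext α β
    rcases α with p | k <;> rcases β with q | m <;>
      simp [Matrix.conjTranspose_apply]
    · exact (hR3 q.1 q.2 p.1 p.2)
    · exact (hM m k)
  have hpsd : (hkQ R P M).PosSemidef := by
    refine Matrix.posSemidef_iff_dotProduct_mulVec.mpr ⟨hherm, fun x => ?_⟩
    have hquad : dotProduct (star x) ((hkQ R P M).mulVec x)
        = (∑ i, ∑ j, ∑ k, ∑ l,
            R i j k l * x (Sum.inl (i,j)) * x (Sum.inl (k,l)))
          + 2 * (∑ i, ∑ j, ∑ k, P i j k * x (Sum.inl (i,j)) * x (Sum.inr k))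
          + ∑ i, ∑ j, M i j * x (Sum.inr i) * x (Sum.inr j) := by
      simp only [dotProduct, Matrix.mulVec, star_trivial, Pi.star_apply,
        Fintype.sum_sum_type, Fintype.sum_prod_type, hkQ_ll, hkQ_lr, hkQ_rl, hkQ_rr,
        Finset.mul_sum, Finset.sum_mul, mul_add, add_mul, Finset.sum_add_distrib]
      ring_nf
      have e1 : (∑ i : Fin n, ∑ j : Fin n, ∑ k : Fin n, ∑ l : Fin n,
            x (Sum.inl (i, j)) * R i j k l * x (Sum.inl (k, l)))
          = ∑ i : Fin n, ∑ j : Fin n, ∑ k : Fin n, ∑ l : Fin n,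
            R i j k l * x (Sum.inl (i, j)) * x (Sum.inl (k, l)) := by
        refine Finset.sum_congr rfl fun i _ => Finset.sum_congr rfl fun j _ =>
          Finset.sum_congr rfl fun k _ => Finset.sum_congr rfl fun l _ => by ring
      have e2 : (∑ k : Fin n, ∑ i : Fin n, ∑ j : Fin n,
            x (Sum.inr k) * P i j k * x (Sum.inl (i, j)))
          = ∑ i : Fin n, ∑ j : Fin n, ∑ k : Fin n,
            P i j k * x (Sum.inl (i, j)) * x (Sum.inr k) := by
        rw [hk_pull3 (fun i j k => P i j k * x (Sum.inl (i,j)) * x (Sum.inr k))]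
        refine Finset.sum_congr rfl fun k _ => Finset.sum_congr rfl fun i _ =>
          Finset.sum_congr rfl fun j _ => by ring
      have e3 : (∑ i : Fin n, ∑ j : Fin n, ∑ k : Fin n,
            x (Sum.inl (i, j)) * P i j k * x (Sum.inr k))
          = ∑ i : Fin n, ∑ j : Fin n, ∑ k : Fin n,
            P i j k * x (Sum.inl (i, j)) * x (Sum.inr k) := by
        refine Finset.sum_congr rfl fun i _ => Finset.sum_congr rfl fun j _ =>
          Finset.sum_congr rfl fun k _ => by ring
      have e4 : (∑ i : Fin n, ∑ j : Fin n, x (Sum.inr i) * M i j * x (Sum.inr j))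
          = ∑ i : Fin n, ∑ j : Fin n, M i j * x (Sum.inr i) * x (Sum.inr j) := by
        refine Finset.sum_congr rfl fun i _ => Finset.sum_congr rfl fun j _ => by ring
      have e5 : (∑ i : Fin n, ∑ j : Fin n, ∑ k : Fin n,
            P i j k * x (Sum.inl (i, j)) * x (Sum.inr k) * 2)
          = 2 * ∑ i : Fin n, ∑ j : Fin n, ∑ k : Fin n,
            P i j k * x (Sum.inl (i, j)) * x (Sum.inr k) := by
        simp only [Finset.mul_sum]
        refine Finset.sum_congr rfl fun i _ => Finset.sum_congr rfl fun j _ =>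
          Finset.sum_congr rfl fun k _ => by ring
      rw [e1, e2, e3, e4, e5]
      ring
    rw [hquad]
    -- antisymmetrize
    have hc2 : (∑ i, ∑ j, ∑ k, ∑ l,
          R i j k l * x (Sum.inl (i,j)) * x (Sum.inl (k,l)))
        = ∑ i, ∑ j, ∑ k, ∑ l,
          R i j k l * ((x (Sum.inl (i,j)) - x (Sum.inl (j,i)))/2)
            * ((x (Sum.inl (k,l)) - x (Sum.inl (l,k)))/2) := by
      have s1 : ∀ i j : Fin n, (∑ k, ∑ l, R i j k l * x (Sum.inl (i,j)) * x (Sum.inl (k,l)))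
          = ∑ k, ∑ l, R i j k l * x (Sum.inl (i,j))
              * ((x (Sum.inl (k,l)) - x (Sum.inl (l,k)))/2) := by
        intro i j
        exact hk_acontr (fun k l => R i j k l * x (Sum.inl (i,j)))
          (fun k l => x (Sum.inl (k,l))) (fun k l => by
            show R i j k l * x (Sum.inl (i,j)) = -(R i j l k * x (Sum.inl (i,j)))
            rw [hR2 i j k l]; ring)
      have mid : ∀ i j : Fin n, (∑ k, ∑ l, R i j k l * x (Sum.inl (i,j))
            * ((x (Sum.inl (k,l)) - x (Sum.inl (l,k)))/2))
          = (∑ k, ∑ l, R i j k l * ((x (Sum.inl (k,l)) - x (Sum.inl (l,k)))/2))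
              * x (Sum.inl (i,j)) := by
        intro i j
        rw [← hk_extract2]
        exact Finset.sum_congr rfl fun k _ => Finset.sum_congr rfl fun l _ => by ring
      have hg : ∀ i j : Fin n,
          (∑ k, ∑ l, R i j k l * ((x (Sum.inl (k,l)) - x (Sum.inl (l,k)))/2))
          = -(∑ k, ∑ l, R j i k l * ((x (Sum.inl (k,l)) - x (Sum.inl (l,k)))/2)) := by
        intro i j
        simp only [← Finset.sum_neg_distrib]
        refine Finset.sum_congr rfl fun k _ => Finset.sum_congr rfl fun l _ => ?_
        rw [hR1 i j k l]; ring
      calc (∑ i, ∑ j, ∑ k, ∑ l, R i j k l * x (Sum.inl (i,j)) * x (Sum.inl (k,l)))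
          = ∑ i, ∑ j, (∑ k, ∑ l, R i j k l
              * ((x (Sum.inl (k,l)) - x (Sum.inl (l,k)))/2)) * x (Sum.inl (i,j)) := by
            exact Finset.sum_congr rfl fun i _ => Finset.sum_congr rfl fun j _ =>
              (s1 i j).trans (mid i j)
        _ = ∑ i, ∑ j, (∑ k, ∑ l, R i j k l
              * ((x (Sum.inl (k,l)) - x (Sum.inl (l,k)))/2))
              * ((x (Sum.inl (i,j)) - x (Sum.inl (j,i)))/2) :=
            hk_acontr _ (fun i j => x (Sum.inl (i,j))) hg
        _ = ∑ i, ∑ j, ∑ k, ∑ l, R i j k l * ((x (Sum.inl (i,j)) - x (Sum.inl (j,i)))/2)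
              * ((x (Sum.inl (k,l)) - x (Sum.inl (l,k)))/2) := by
            refine Finset.sum_congr rfl fun i _ => Finset.sum_congr rfl fun j _ => ?_
            rw [← hk_extract2]
            exact Finset.sum_congr rfl fun k _ => Finset.sum_congr rfl fun l _ => by ring
    have hc3 : (∑ i, ∑ j, ∑ k, P i j k * x (Sum.inl (i,j)) * x (Sum.inr k))
        = ∑ i, ∑ j, ∑ k,
          P i j k * ((x (Sum.inl (i,j)) - x (Sum.inl (j,i)))/2) * x (Sum.inr k) := by
      have mid : ∀ i j : Fin n, (∑ k, P i j k * x (Sum.inl (i,j)) * x (Sum.inr k))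
          = (∑ k, P i j k * x (Sum.inr k)) * x (Sum.inl (i,j)) := by
        intro i j
        rw [← hk_extract1]
        exact Finset.sum_congr rfl fun k _ => by ring
      have hg : ∀ i j : Fin n, (∑ k, P i j k * x (Sum.inr k))
          = -(∑ k, P j i k * x (Sum.inr k)) := by
        intro i j
        simp only [← Finset.sum_neg_distrib]
        refine Finset.sum_congr rfl fun k _ => ?_
        rw [hP i j k]; ring
      calc (∑ i, ∑ j, ∑ k, P i j k * x (Sum.inl (i,j)) * x (Sum.inr k))
          = ∑ i, ∑ j, (∑ k, P i j k * x (Sum.inr k)) * x (Sum.inl (i,j)) :=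
            Finset.sum_congr rfl fun i _ => Finset.sum_congr rfl fun j _ => mid i j
        _ = ∑ i, ∑ j, (∑ k, P i j k * x (Sum.inr k))
              * ((x (Sum.inl (i,j)) - x (Sum.inl (j,i)))/2) :=
            hk_acontr _ (fun i j => x (Sum.inl (i,j))) hg
        _ = ∑ i, ∑ j, ∑ k, P i j k * ((x (Sum.inl (i,j)) - x (Sum.inl (j,i)))/2)
              * x (Sum.inr k) := by
            refine Finset.sum_congr rfl fun i _ => Finset.sum_congr rfl fun j _ => ?_
            rw [← hk_extract1]
            exact Finset.sum_congr rfl fun k _ => by ring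
    rw [hc2, hc3]
    exact hpos (fun i j => (x (Sum.inl (i,j)) - x (Sum.inl (j,i)))/2)
      (fun i j => by ring) (fun k => x (Sum.inr k))
  -- Step 2: factor the matrix.
  obtain ⟨B, hB⟩ := hk_psd_factor hpsd
  have hQapp : ∀ α β, hkQ R P M α β = ∑ r, B r α * B r β := by
    intro α β
    conv_lhs => rw [hB]
    simp [Matrix.mul_apply, Matrix.conjTranspose_apply]
  set X : ((Fin n × Fin n) ⊕ Fin n) → Fin n → Fin n → ℝ :=
    fun r i j => (B r (Sum.inl (i,j)) - B r (Sum.inl (j,i)))/2 with hX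
  set V : ((Fin n × Fin n) ⊕ Fin n) → Fin n → ℝ := fun r k => B r (Sum.inr k) with hV
  have hRx : ∀ i j k l, R i j k l = ∑ r, X r i j * X r k l := by
    intro i j k l
    have e1 := hQapp (Sum.inl (i,j)) (Sum.inl (k,l))
    have e2 := hQapp (Sum.inl (j,i)) (Sum.inl (k,l))
    have e3 := hQapp (Sum.inl (i,j)) (Sum.inl (l,k))
    have e4 := hQapp (Sum.inl (j,i)) (Sum.inl (l,k))
    simp only [hkQ_ll] at e1 e2 e3 e4
    have key : ∑ r, X r i j * X r k l
        = ((∑ r, B r (Sum.inl (i,j)) * B r (Sum.inl (k,l)))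
          - (∑ r, B r (Sum.inl (j,i)) * B r (Sum.inl (k,l)))
          - ((∑ r, B r (Sum.inl (i,j)) * B r (Sum.inl (l,k)))
          - (∑ r, B r (Sum.inl (j,i)) * B r (Sum.inl (l,k))))) / 4 := by
      rw [← Finset.sum_sub_distrib, ← Finset.sum_sub_distrib, ← Finset.sum_sub_distrib,
        Finset.sum_div]
      refine Finset.sum_congr rfl fun r _ => ?_
      simp only [hX]
      ring
    rw [key, ← e1, ← e2, ← e3, ← e4]
    have s1 := hR1 j i k l
    have s2 := hR2 i j l k
    have s3 : R j i l k = R i j k l := by rw [hR1 j i l k, hR2 i j l k]; ring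
    rw [s1, s2, s3]; ring
  have hPx : ∀ i j k, P i j k = ∑ r, X r i j * V r k := by
    intro i j k
    have e1 := hQapp (Sum.inl (i,j)) (Sum.inr k)
    have e2 := hQapp (Sum.inl (j,i)) (Sum.inr k)
    simp only [hkQ_lr] at e1 e2
    have key : ∑ r, X r i j * V r k
        = ((∑ r, B r (Sum.inl (i,j)) * B r (Sum.inr k))
          - ∑ r, B r (Sum.inl (j,i)) * B r (Sum.inr k)) / 2 := by
      rw [← Finset.sum_sub_distrib, Finset.sum_div]
      refine Finset.sum_congr rfl fun r _ => ?_
      simp only [hX, hV]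
      ring
    rw [key, ← e1, ← e2, hP j i k]
    ring
  have hMx : ∀ i j, M i j = ∑ r, V r i * V r j := by
    intro i j
    have e1 := hQapp (Sum.inr i) (Sum.inr j)
    simp only [hkQ_rr] at e1
    rw [e1]
  have hXa : ∀ r i j, X r i j = -X r j i := by
    intro r i j
    simp only [hX]
    ring
  -- Step 3: the two basic bilinear quantities.
  set Fa : ((Fin n × Fin n) ⊕ Fin n) → ((Fin n × Fin n) ⊕ Fin n) → ℝ :=
    fun r s => ∑ i, ∑ j, ∑ p, U i j * X r i p * X s j p with hFa
  set Fb : ((Fin n × Fin n) ⊕ Fin n) → ((Fin n × Fin n) ⊕ Fin n) → ℝ :=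
    fun r s => ∑ i, ∑ j, W i * X r i j * V s j with hFb
  have hA : ∀ r s, Fa s r = -Fa r s := by
    intro r s
    have e : Fa s r = ∑ j, ∑ i, ∑ p, U i j * X s i p * X r j p := Finset.sum_comm
    rw [e]
    have h1 : (∑ j, ∑ i, ∑ p, U i j * X s i p * X r j p)
        = ∑ a, ∑ b, ∑ p, -(U a b * X r a p * X s b p) := by
      refine Finset.sum_congr rfl fun a _ => Finset.sum_congr rfl fun b _ =>
        Finset.sum_congr rfl fun p _ => ?_
      rw [hU b a]; ring
    rw [h1]
    simp only [Finset.sum_neg_distrib]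
    rfl
  -- Step 4: the four structure identities.
  have hG1 : (∑ i, ∑ j, ∑ k, ∑ l, R i k j l * M k l * W i * W j)
      = ∑ r, ∑ s, Fb r s * Fb r s := by
    calc (∑ i, ∑ j, ∑ k, ∑ l, R i k j l * M k l * W i * W j)
        = ∑ i, ∑ j, ∑ k, ∑ l, ∑ r, ∑ s,
            (W i * X r i k * V s k) * (W j * X r j l * V s l) := by
          refine Finset.sum_congr rfl fun i _ => Finset.sum_congr rfl fun j _ =>
            Finset.sum_congr rfl fun k _ => Finset.sum_congr rfl fun l _ => ?_
          rw [hRx i k j l, hMx k l, Finset.sum_mul_sum]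
          simp only [Finset.sum_mul]
          refine Finset.sum_congr rfl fun r _ => Finset.sum_congr rfl fun s _ => by ring
      _ = ∑ r, ∑ s, ∑ i, ∑ j, ∑ k, ∑ l,
            (W i * X r i k * V s k) * (W j * X r j l * V s l) :=
          (hk_pull5 _).trans (Finset.sum_congr rfl fun r _ => hk_pull5 _)
      _ = ∑ r, ∑ s, (∑ i, ∑ k, W i * X r i k * V s k)
            * (∑ j, ∑ l, W j * X r j l * V s l) := by
          refine Finset.sum_congr rfl fun r _ => Finset.sum_congr rfl fun s _ => ?_
          rw [show (∑ i : Fin n, ∑ j : Fin n, ∑ k : Fin n, ∑ l : Fin n,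
              (W i * X r i k * V s k) * (W j * X r j l * V s l))
            = ∑ i : Fin n, ∑ k : Fin n, ∑ j : Fin n, ∑ l : Fin n,
              (W i * X r i k * V s k) * (W j * X r j l * V s l) from
            Finset.sum_congr rfl fun i _ => Finset.sum_comm]
          exact hk_factor22 _ _
      _ = ∑ r, ∑ s, Fb r s * Fb r s := rfl
  have hG2 : (∑ i, ∑ j, ∑ k, ∑ l, P i k l * P j l k * W i * W j)
      = ∑ r, ∑ s, Fb r s * Fb s r := by
    calc (∑ i, ∑ j, ∑ k, ∑ l, P i k l * P j l k * W i * W j)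
        = ∑ i, ∑ j, ∑ k, ∑ l, ∑ r, ∑ s,
            (W i * X r i k * V s k) * (W j * X s j l * V r l) := by
          refine Finset.sum_congr rfl fun i _ => Finset.sum_congr rfl fun j _ =>
            Finset.sum_congr rfl fun k _ => Finset.sum_congr rfl fun l _ => ?_
          rw [hPx i k l, hPx j l k, Finset.sum_mul_sum]
          simp only [Finset.sum_mul]
          refine Finset.sum_congr rfl fun r _ => Finset.sum_congr rfl fun s _ => by ring
      _ = ∑ r, ∑ s, ∑ i, ∑ j, ∑ k, ∑ l,
            (W i * X r i k * V s k) * (W j * X s j l * V r l) :=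
          (hk_pull5 _).trans (Finset.sum_congr rfl fun r _ => hk_pull5 _)
      _ = ∑ r, ∑ s, (∑ i, ∑ k, W i * X r i k * V s k)
            * (∑ j, ∑ l, W j * X s j l * V r l) := by
          refine Finset.sum_congr rfl fun r _ => Finset.sum_congr rfl fun s _ => ?_
          rw [show (∑ i : Fin n, ∑ j : Fin n, ∑ k : Fin n, ∑ l : Fin n,
              (W i * X r i k * V s k) * (W j * X s j l * V r l))
            = ∑ i : Fin n, ∑ k : Fin n, ∑ j : Fin n, ∑ l : Fin n,
              (W i * X r i k * V s k) * (W j * X s j l * V r l) from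
            Finset.sum_congr rfl fun i _ => Finset.sum_comm]
          exact hk_factor22 _ _
      _ = ∑ r, ∑ s, Fb r s * Fb s r := rfl
  have hG3 : (∑ i, ∑ j, ∑ k, ∑ l, ∑ p, R i l k p * P l j p * U i j * W k)
      = -∑ r, ∑ s, Fa r s * Fb r s := by
    calc (∑ i, ∑ j, ∑ k, ∑ l, ∑ p, R i l k p * P l j p * U i j * W k)
        = ∑ i, ∑ j, ∑ k, ∑ l, ∑ p, ∑ r, ∑ s,
            (U i j * X r i l * X s l j) * (W k * X r k p * V s p) := by
          refine Finset.sum_congr rfl fun i _ => Finset.sum_congr rfl fun j _ =>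
            Finset.sum_congr rfl fun k _ => Finset.sum_congr rfl fun l _ =>
            Finset.sum_congr rfl fun p _ => ?_
          rw [hRx i l k p, hPx l j p, Finset.sum_mul_sum]
          simp only [Finset.sum_mul]
          refine Finset.sum_congr rfl fun r _ => Finset.sum_congr rfl fun s _ => by ring
      _ = ∑ r, ∑ s, ∑ i, ∑ j, ∑ k, ∑ l, ∑ p,
            (U i j * X r i l * X s l j) * (W k * X r k p * V s p) :=
          (hk_pull6 _).trans (Finset.sum_congr rfl fun r _ => hk_pull6 _)
      _ = ∑ r, ∑ s, (∑ i, ∑ j, ∑ l, U i j * X r i l * X s l j)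
            * (∑ k, ∑ p, W k * X r k p * V s p) := by
          refine Finset.sum_congr rfl fun r _ => Finset.sum_congr rfl fun s _ => ?_
          rw [show (∑ i : Fin n, ∑ j : Fin n, ∑ k : Fin n, ∑ l : Fin n, ∑ p : Fin n,
              (U i j * X r i l * X s l j) * (W k * X r k p * V s p))
            = ∑ i : Fin n, ∑ j : Fin n, ∑ l : Fin n, ∑ k : Fin n, ∑ p : Fin n,
              (U i j * X r i l * X s l j) * (W k * X r k p * V s p) from
            Finset.sum_congr rfl fun i _ => Finset.sum_congr rfl fun j _ =>
              Finset.sum_comm]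
          exact hk_factor32 _ _
      _ = ∑ r, ∑ s, -(Fa r s * Fb r s) := by
          refine Finset.sum_congr rfl fun r _ => Finset.sum_congr rfl fun s _ => ?_
          have h1 : (∑ i, ∑ j, ∑ l, U i j * X r i l * X s l j) = -Fa r s := by
            have h2 : (∑ i, ∑ j, ∑ l, U i j * X r i l * X s l j)
                = ∑ i, ∑ j, ∑ l, -(U i j * X r i l * X s j l) := by
              refine Finset.sum_congr rfl fun i _ => Finset.sum_congr rfl fun j _ =>
                Finset.sum_congr rfl fun l _ => ?_
              rw [hXa s l j]; ring
            rw [h2]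
            simp only [Finset.sum_neg_distrib]
            rfl
          rw [h1]; ring
      _ = -∑ r, ∑ s, Fa r s * Fb r s := by
          simp only [Finset.sum_neg_distrib]
  have hG4 : (∑ i, ∑ j, ∑ k, ∑ l, ∑ p, ∑ q, R i p k q * R j p l q * U i j * U k l)
      = ∑ r, ∑ s, Fa r s * Fa r s := by
    calc (∑ i, ∑ j, ∑ k, ∑ l, ∑ p, ∑ q, R i p k q * R j p l q * U i j * U k l)
        = ∑ i, ∑ j, ∑ k, ∑ l, ∑ p, ∑ q, ∑ r, ∑ s,
            (U i j * X r i p * X s j p) * (U k l * X r k q * X s l q) := by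
          refine Finset.sum_congr rfl fun i _ => Finset.sum_congr rfl fun j _ =>
            Finset.sum_congr rfl fun k _ => Finset.sum_congr rfl fun l _ =>
            Finset.sum_congr rfl fun p _ => Finset.sum_congr rfl fun q _ => ?_
          rw [hRx i p k q, hRx j p l q, Finset.sum_mul_sum]
          simp only [Finset.sum_mul]
          refine Finset.sum_congr rfl fun r _ => Finset.sum_congr rfl fun s _ => by ring
      _ = ∑ r, ∑ s, ∑ i, ∑ j, ∑ k, ∑ l, ∑ p, ∑ q,
            (U i j * X r i p * X s j p) * (U k l * X r k q * X s l q) :=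
          (hk_pull7 _).trans (Finset.sum_congr rfl fun r _ => hk_pull7 _)
      _ = ∑ r, ∑ s, (∑ i, ∑ j, ∑ p, U i j * X r i p * X s j p)
            * (∑ k, ∑ l, ∑ q, U k l * X r k q * X s l q) := by
          refine Finset.sum_congr rfl fun r _ => Finset.sum_congr rfl fun s _ => ?_
          rw [show (∑ i : Fin n, ∑ j : Fin n, ∑ k : Fin n, ∑ l : Fin n, ∑ p : Fin n,
                ∑ q : Fin n,
              (U i j * X r i p * X s j p) * (U k l * X r k q * X s l q))
            = ∑ i : Fin n, ∑ j : Fin n, ∑ p : Fin n, ∑ k : Fin n, ∑ l : Fin n,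
                ∑ q : Fin n,
              (U i j * X r i p * X s j p) * (U k l * X r k q * X s l q) from
            Finset.sum_congr rfl fun i _ => Finset.sum_congr rfl fun j _ =>
              hk_pull3 _]
          exact hk_factor33 _ _
      _ = ∑ r, ∑ s, Fa r s * Fa r s := rfl
  -- Step 5: assemble.
  have hEq : 2 * (∑ i, ∑ j, ∑ k, ∑ l, R i k j l * M k l * W i * W j)
          - 2 * (∑ i, ∑ j, ∑ k, ∑ l, P i k l * P j l k * W i * W j)
          + 8 * (∑ i, ∑ j, ∑ k, ∑ l, ∑ p, R i l k p * P l j p * U i j * W k)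
          + 4 * (∑ i, ∑ j, ∑ k, ∑ l, ∑ p, ∑ q, R i p k q * R j p l q * U i j * U k l)
      = ∑ r, ∑ s, (2 * Fa r s - Fb r s + Fb s r)^2 := by
    rw [hG1, hG2, hG3, hG4]
    have e1 : (∑ r, ∑ s, (2 * Fa r s - Fb r s + Fb s r)^2)
        = ∑ r, ∑ s, (4*(Fa r s * Fa r s) + (Fb r s * Fb r s) + (Fb s r * Fb s r)
            - 4*(Fa r s * Fb r s) + 4*(Fa r s * Fb s r) - 2*(Fb r s * Fb s r)) :=
      Finset.sum_congr rfl fun r _ => Finset.sum_congr rfl fun s _ => by ring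
    rw [e1]
    simp only [Finset.sum_add_distrib, Finset.sum_sub_distrib, ← Finset.mul_sum]
    have e2 : (∑ r, ∑ s, Fb s r * Fb s r) = ∑ r, ∑ s, Fb r s * Fb r s := Finset.sum_comm
    have e3 : (∑ r, ∑ s, Fa r s * Fb s r) = -∑ r, ∑ s, Fa r s * Fb r s := by
      rw [Finset.sum_comm]
      have h1 : (∑ s, ∑ r, Fa r s * Fb s r) = ∑ a, ∑ b, -(Fa a b * Fb a b) := by
        refine Finset.sum_congr rfl fun a _ => Finset.sum_congr rfl fun b _ => ?_
        rw [hA a b]; ring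
      rw [h1]
      simp only [Finset.sum_neg_distrib]
    rw [e2, e3]
    ring
  rw [hEq]
  exact Finset.sum_nonneg fun r _ => Finset.sum_nonneg fun s _ => sq_nonneg _
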